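/- With Ξ_ρ(s) = ∫₀^∞ t^(s/2-1) Ψ(t) e^{-ρ log²(t)} dt for ρ > 0, the difference Ξ_ρ(s) - Ξ_ρ(1-s) vanishes if and only if s ∈ 1/2 + 16ρπi·ℤ, i.e. s = 1/2 + 16ρπi·k for some integer k. -/

import Mathlib

open MeasureTheory Real Filter Complex

noncomputable def Psi (t : ℝ) : ℝ := ∑' n : ℕ, Real.exp (-Real.pi * ((n : ℝ) + 1) ^ 2 * t)

noncomputable def Xi (ρ : ℝ) (s : ℂ) : ℂ :=
  ∫ t in Set.Ioi (0:ℝ), (t : ℂ) ^ (s / 2 - 1) * (Psi t : ℂ) * (Real.exp (-ρ * Real.log t ^ 2) : ℂ)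

lemma psi_hasSumC {t : ℝ} (ht : 0 < t) :
    HasSum (fun n : ℕ => ((Real.exp (-Real.pi * ((n : ℝ) + 1) ^ 2 * t) : ℝ) : ℂ))
      ((jacobiTheta (t * Complex.I) - 1) / 2) := by
  have hτ : 0 < ((t : ℂ) * Complex.I).im := by simpa using ht
  have h := hasSum_nat_jacobiTheta hτ
  refine h.congr_fun fun n => ?_
  rw [Complex.ofReal_exp]
  congr 1
  push_cast
  ring_nf
  rw [Complex.I_sq]
  ring

lemma psiC {t : ℝ} (ht : 0 < t) :
    ((Psi t : ℝ) : ℂ) = (jacobiTheta (t * Complex.I) - 1) / 2 := by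
  have h := psi_hasSumC ht
  have him : ((jacobiTheta (t * Complex.I) - 1) / 2).im = 0 := by
    have := (h.mapL Complex.imCLM)
    simpa using this.unique hasSum_zero
  have hre : HasSum (fun n : ℕ => Real.exp (-Real.pi * ((n : ℝ) + 1) ^ 2 * t))
      (((jacobiTheta (t * Complex.I) - 1) / 2).re) := by
    exact (h.mapL Complex.reCLM).congr_fun fun n => by rw [Complex.reCLM_apply, Complex.ofReal_re]
  rw [Psi, hre.tsum_eq]
  exact Complex.ext (by simp) (by simp [him])

lemma psi_hasSum {t : ℝ} (ht : 0 < t) :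
    HasSum (fun n : ℕ => Real.exp (-Real.pi * ((n : ℝ) + 1) ^ 2 * t)) (Psi t) := by
  have h := psi_hasSumC ht
  rw [← psiC ht] at h
  exact Complex.hasSum_ofReal.mp h

lemma psi_nonneg (t : ℝ) : 0 ≤ Psi t := tsum_nonneg fun n => (Real.exp_pos _).le

lemma psi_le_psi_one {t : ℝ} (ht : 1 ≤ t) : Psi t ≤ Psi 1 := by
  refine Summable.tsum_le_tsum (fun n => ?_) (psi_hasSum (by linarith)).summable
    (psi_hasSum one_pos).summable
  rw [Real.exp_le_exp]
  have h2 : (0:ℝ) < ((n:ℝ)+1)^2 := by positivity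
  nlinarith [mul_nonneg (mul_pos Real.pi_pos h2).le (sub_nonneg.mpr ht)]

lemma theta_fe (x : ℝ) :
    jacobiTheta ((rexp (-x) : ℝ) * Complex.I)
      = (rexp (x/2) : ℝ) * jacobiTheta ((rexp x : ℝ) * Complex.I) := by
  set τ : UpperHalfPlane := ⟨(rexp x : ℝ) * Complex.I, by simpa [Complex.exp_ofReal_re] using Real.exp_pos x⟩
  have h := jacobiTheta_S_smul τ
  have hcoe : ((ModularGroup.S • τ : UpperHalfPlane) : ℂ) = ((rexp (-x) : ℝ) : ℂ) * Complex.I := by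
    rw [UpperHalfPlane.modular_S_smul]
    simp only [UpperHalfPlane.coe_mk]
    have hτc : (τ : ℂ) = (rexp x : ℝ) * Complex.I := rfl
    rw [hτc, Real.exp_neg, Complex.ofReal_inv, inv_neg, mul_inv, Complex.inv_I]
    ring
  have hpow : (-Complex.I * ((rexp x : ℝ) * Complex.I)) ^ (1/2 : ℂ) = ((rexp (x/2) : ℝ) : ℂ) := by
    have h1 : (-Complex.I * ((rexp x : ℝ) * Complex.I)) = ((rexp x : ℝ) : ℂ) := by
      rw [show -Complex.I * ((rexp x : ℝ) * Complex.I) = -(Complex.I * Complex.I) * (rexp x : ℝ) by ring,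
        Complex.I_mul_I]
      ring
    rw [h1, show ((1:ℂ)/2) = ((1/2 : ℝ) : ℂ) by norm_num, ← Complex.ofReal_cpow (Real.exp_pos x).le]
    rw [← Real.exp_log (x := rexp x ^ (1/2:ℝ)) (by positivity), Real.log_rpow (Real.exp_pos x),
      Real.log_exp]
    push_cast
    ring_nf
  have hτc : (τ : ℂ) = (rexp x : ℝ) * Complex.I := rfl
  rw [hcoe, hτc, hpow] at h
  exact h

lemma psi_fe (x : ℝ) :
    ((Psi (rexp (-x)) : ℝ) : ℂ)
      = (rexp (x/2) : ℝ) * (Psi (rexp x) : ℝ) + ((rexp (x/2) : ℝ) - 1) / 2 := by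
  rw [psiC (Real.exp_pos _), psiC (Real.exp_pos _), theta_fe x]
  ring

lemma psi_fe_real (x : ℝ) :
    Psi (rexp (-x)) = rexp (x/2) * Psi (rexp x) + (rexp (x/2) - 1) / 2 := by
  have := psi_fe x
  exact_mod_cast this

lemma psi_bound (x : ℝ) : Psi (rexp x) ≤ (Psi 1 + 1) * (1 + rexp (-x/2)) := by
  have h1 : (0:ℝ) ≤ Psi 1 := psi_nonneg 1
  rcases le_or_gt 0 x with hx | hx
  · have h2 : Psi (rexp x) ≤ Psi 1 := psi_le_psi_one (Real.one_le_exp hx)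
    nlinarith [Real.exp_pos (-x/2)]
  · have hfe := psi_fe_real (-x)
    rw [neg_neg] at hfe
    have h3 : Psi (rexp (-x)) ≤ Psi 1 := psi_le_psi_one (Real.one_le_exp (by linarith))
    nlinarith [Real.exp_pos (-x/2), psi_nonneg (rexp (-x)),
      mul_nonneg (Real.exp_pos (-x/2)).le (sub_nonneg.mpr h3)]

lemma psi_exp_continuous : Continuous fun x : ℝ => Psi (rexp x) := by
  have key : ∀ x : ℝ, Psi (rexp x) = ((jacobiTheta ((rexp x : ℝ) * Complex.I)).re - 1) / 2 := by
    intro x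
    have := psiC (Real.exp_pos x)
    have h2 := congrArg Complex.re this
    simpa using h2
  simp_rw [key]
  refine (Continuous.sub ?_ continuous_const).div_const 2
  refine Complex.continuous_re.comp ?_
  rw [continuous_iff_continuousAt]
  intro x
  refine (continuousAt_jacobiTheta ?_).comp ?_
  · simpa [Complex.exp_ofReal_re] using Real.exp_pos x
  · fun_prop

lemma integral_Ioi_exp (F : ℝ → ℂ) :
    ∫ t in Set.Ioi (0:ℝ), F t = ∫ x : ℝ, Real.exp x • F (Real.exp x) := by
  rw [← Real.range_exp, ← Set.image_univ,
    MeasureTheory.integral_image_eq_integral_abs_deriv_smul MeasurableSet.univ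
      (fun x _ => (Real.hasDerivAt_exp x).hasDerivWithinAt) Real.exp_injective.injOn F]
  simp [abs_of_pos (Real.exp_pos _)]

lemma Xi_eq (ρ : ℝ) (s : ℂ) :
    Xi ρ s = ∫ x : ℝ, cexp (s/2 * x - ρ * x^2) * (Psi (rexp x) : ℂ) := by
  rw [Xi, integral_Ioi_exp]
  congr 1
  funext x
  have hx0 : ((rexp x : ℝ) : ℂ) ≠ 0 := by exact_mod_cast (Real.exp_pos x).ne'
  rw [Real.log_exp, Complex.real_smul, Complex.cpow_def_of_ne_zero hx0,
    ← Complex.ofReal_log (Real.exp_pos x).le, Real.log_exp,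
    show ((rexp (-ρ * x^2) : ℝ) : ℂ) = cexp (-(ρ:ℂ) * (x:ℂ)^2) by
      rw [Complex.ofReal_exp]; congr 1; push_cast; ring,
    Complex.ofReal_exp,
    show cexp (s/2 * ↑x - ↑ρ * ↑x^2)
        = cexp ↑x * (cexp (↑x * (s/2-1)) * cexp (-(ρ:ℂ) * ↑x^2)) by
      rw [← Complex.exp_add, ← Complex.exp_add]; congr 1; ring]
  ring

lemma gauss_integrable {ρ : ℝ} (hρ : 0 < ρ) (w : ℂ) :
    Integrable (fun x : ℝ => cexp (w * x - ρ * x^2)) := by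
  have hb : (0:ℝ) < ((ρ:ℂ)).re := by simpa using hρ
  have h := integrable_cexp_quadratic hb w 0
  have he : ∀ x : ℝ, -(ρ:ℂ) * x^2 + w * x + 0 = w * x - ρ * x^2 := fun x => by ring
  simp_rw [he] at h
  exact h

lemma gauss_val {ρ : ℝ} (hρ : 0 < ρ) (w : ℂ) :
    ∫ x : ℝ, cexp (w * x - ρ * x^2) = (↑π / ↑ρ) ^ (1/2 : ℂ) * cexp (w^2 / (4 * ρ)) := by
  have h := integral_cexp_quadratic (b := -(ρ:ℂ)) (by simpa using hρ) w 0
  rw [show ∫ x : ℝ, cexp (w * x - ρ * x^2) = ∫ x : ℝ, cexp (-(ρ:ℂ) * x^2 + w * x + 0) by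
    congr 1; funext x; congr 1; ring] 
  rw [h, neg_neg, zero_sub]
  congr 1
  rw [show (4 : ℂ) * -↑ρ = -(4 * ρ) by ring, div_neg, neg_neg]

lemma rgauss_integrable {ρ : ℝ} (hρ : 0 < ρ) (c : ℝ) :
    Integrable (fun x : ℝ => rexp (c * x - ρ * x^2)) := by
  have h := (gauss_integrable hρ (c : ℂ)).norm
  have he : ∀ x : ℝ, ‖cexp ((c:ℂ) * x - ρ * x^2)‖ = rexp (c * x - ρ * x^2) := by
    intro x
    rw [show (c:ℂ) * ↑x - ↑ρ * ↑x^2 = ((c * x - ρ * x^2 : ℝ) : ℂ) by push_cast; ring,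
      ← Complex.ofReal_exp, Complex.norm_real, Real.norm_eq_abs, _root_.abs_of_pos (Real.exp_pos _)]
  simp_rw [he] at h
  exact h

lemma f_integrable {ρ : ℝ} (hρ : 0 < ρ) (w : ℂ) :
    Integrable (fun x : ℝ => cexp (w * x - ρ * x^2) * (Psi (rexp x) : ℂ)) := by
  have hmeas : AEStronglyMeasurable (fun x : ℝ => cexp (w * x - ρ * x^2) * (Psi (rexp x) : ℂ)) volume := by
    refine Continuous.aestronglyMeasurable ?_
    refine (Complex.continuous_exp.comp (by fun_prop)).mul ?_
    exact Complex.continuous_ofReal.comp psi_exp_continuous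
  set C := Psi 1 + 1 with hC
  have hC0 : 0 ≤ C := by have := psi_nonneg 1; simp [hC]; linarith
  refine Integrable.mono'
    (g := fun x => C * (rexp (w.re * x - ρ * x^2) + rexp ((w.re - 1/2) * x - ρ * x^2)))
    (((rgauss_integrable hρ w.re).add (rgauss_integrable hρ (w.re - 1/2))).const_mul C)
    hmeas
    (Filter.Eventually.of_forall fun x => ?_)
  rw [norm_mul, Complex.norm_exp, Complex.norm_real, Real.norm_eq_abs,
    _root_.abs_of_nonneg (psi_nonneg _)]
  have hre : (w * (x:ℂ) - (ρ:ℂ) * (x:ℂ)^2).re = w.re * x - ρ * x^2 := by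
    simp [Complex.sub_re, Complex.mul_re, ← Complex.ofReal_pow]
  rw [hre]
  have hb := psi_bound x
  have h1 : rexp (w.re * x - ρ * x^2) * rexp (-x/2) = rexp ((w.re - 1/2) * x - ρ * x^2) := by
    rw [← Real.exp_add]; congr 1; ring
  calc rexp (w.re * x - ρ * x^2) * Psi (rexp x)
      ≤ rexp (w.re * x - ρ * x^2) * (C * (1 + rexp (-x/2))) :=
        mul_le_mul_of_nonneg_left hb (Real.exp_pos _).le
    _ = C * (rexp (w.re * x - ρ * x^2) + rexp ((w.re - 1/2) * x - ρ * x^2)) := by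
        rw [← h1]; ring


lemma key {ρ : ℝ} (hρ : 0 < ρ) (s : ℂ) :
    Xi ρ s - Xi ρ (1-s)
      = (↑π / ↑ρ) ^ (1/2 : ℂ) * (cexp ((s-1)^2 / (16*ρ)) - cexp (s^2 / (16*ρ))) / 2 := by
  have hsub : Xi ρ (1-s)
      = ∫ x : ℝ, (cexp (s/2 * x - ρ * x^2) * (Psi (rexp x) : ℂ)
          + (cexp (s/2 * x - ρ * x^2) - cexp ((s-1)/2 * x - ρ * x^2)) / 2) := by
    rw [Xi_eq]
    rw [← integral_neg_eq_self (fun x : ℝ => cexp ((1-s)/2 * x - ρ * x^2) * (Psi (rexp x) : ℂ)) volume]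
    congr 1
    funext x
    push_cast
    have e1 : cexp ((1-s)/2 * (-(x:ℂ)) - ρ * (-(x:ℂ))^2) = cexp ((s-1)/2 * x - ρ * x^2) := by
      congr 1; ring
    have e2 : cexp ((s-1)/2 * (x:ℂ) - ρ * x^2) * cexp ((x:ℂ)/2) = cexp (s/2 * x - ρ * x^2) := by
      rw [← Complex.exp_add]; congr 1; ring
    rw [e1, psi_fe x, Complex.ofReal_exp,
      show (((x/2 : ℝ)) : ℂ) = (x:ℂ)/2 by push_cast; ring]
    linear_combination ((Psi (rexp x) : ℂ) + 1/2) * e2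
  have hint2 : Integrable (fun x : ℝ =>
      (cexp (s/2 * x - ρ * x^2) - cexp ((s-1)/2 * x - ρ * x^2)) / 2) volume :=
    ((gauss_integrable hρ (s/2)).sub (gauss_integrable hρ ((s-1)/2))).div_const 2
  rw [Xi_eq, hsub, integral_add (f_integrable hρ (s/2)) hint2,
    integral_div, integral_sub (gauss_integrable hρ (s/2)) (gauss_integrable hρ ((s-1)/2)),
    gauss_val hρ (s/2), gauss_val hρ ((s-1)/2)]
  rw [show ((s-1)/2)^2 / (4*(ρ:ℂ)) = (s-1)^2 / (16*ρ) by ring,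
    show (s/2)^2 / (4*(ρ:ℂ)) = s^2 / (16*ρ) by ring]
  ring

theorem stmt3 (ρ : ℝ) (hρ : 0 < ρ) (s : ℂ) :
    Xi ρ s - Xi ρ (1 - s) = 0 ↔
      ∃ k : ℤ, s = 1/2 + 16 * (ρ : ℂ) * (Real.pi : ℂ) * Complex.I * (k : ℂ) := by
  have hρ' : ((ρ:ℝ) : ℂ) ≠ 0 := Complex.ofReal_ne_zero.mpr hρ.ne'
  have hc : ((π : ℂ) / ρ) ^ (1/2 : ℂ) ≠ 0 := by
    intro h
    rw [Complex.cpow_eq_zero_iff] at h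
    exact (div_ne_zero (Complex.ofReal_ne_zero.mpr Real.pi_ne_zero) hρ') h.1
  have h1 : Xi ρ s - Xi ρ (1 - s) = 0 ↔ cexp ((s-1)^2 / (16*ρ)) = cexp (s^2 / (16*ρ)) := by
    rw [key hρ s, div_eq_zero_iff, mul_eq_zero]
    constructor
    · rintro ((h | h) | h)
      · exact absurd h hc
      · exact sub_eq_zero.mp h
      · norm_num at h
    · intro h
      exact Or.inl (Or.inr (sub_eq_zero.mpr h))
  rw [h1, Complex.exp_eq_exp_iff_exists_int]
  constructor
  · rintro ⟨n, hn⟩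
    refine ⟨-n, ?_⟩
    have hn' : (s-1)^2 = s^2 + n * (2*π*Complex.I) * (16*ρ) := by
      field_simp at hn
      linear_combination hn
    push_cast
    linear_combination (-1/2 : ℂ) * hn'
  · rintro ⟨k, hk⟩
    refine ⟨-k, ?_⟩
    subst hk
    push_cast
    field_simp
    ring
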